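/- Let (Ω, μ) be a probability space, let X, X̃ : Ω → ℝ^{dX} be measurable (the joint law of a raw data point and its augmentation), let f : ℝ^{dX} → ℝ^{dZ}, h : ℝ^{dZ} → ℝ^{dZ}, g : ℝ^{dZ} → ℝ^{dX} be measurable, and define L_RC = ∫ ‖g(h(f(X̃ ω))) − X ω‖ dμ(ω), L_CL = ∫ ‖h(f(X̃ ω)) − f(X ω)‖ dμ(ω), and L_reg = ∫ ‖g(f(X ω)) − X ω‖ dμ(ω), where ‖·‖ is the Euclidean norm, assuming all integrands are integrable. If there exists λmax > 0 such that ‖g(a) − g(b)‖ ≤ λmax · ‖a − b‖ for all a, b ∈ ℝ^{dZ}, then L_CL + (1/λmax) · L_reg ≥ (1/λmax) · L_RC. -/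
import Mathlib


open MeasureTheory

/-- Part ① of Theorem 1: if the decoder `g` is `λmax`-Lipschitz, then
`L_CL + (1/λmax) · L_reg ≥ (1/λmax) · L_RC`. -/
theorem unicorn_theorem1_part1
    {dX dZ : ℕ} {Ω : Type*} [MeasurableSpace Ω]
    (μ : Measure Ω) [IsProbabilityMeasure μ]
    (X Xt : Ω → EuclideanSpace ℝ (Fin dX))
    (hX : Measurable X) (hXt : Measurable Xt)
    (f : EuclideanSpace ℝ (Fin dX) → EuclideanSpace ℝ (Fin dZ))
    (h : EuclideanSpace ℝ (Fin dZ) → EuclideanSpace ℝ (Fin dZ))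
    (g : EuclideanSpace ℝ (Fin dZ) → EuclideanSpace ℝ (Fin dX))
    (hf : Measurable f) (hh : Measurable h) (hg : Measurable g)
    (hRC : Integrable (fun ω => ‖g (h (f (Xt ω))) - X ω‖) μ)
    (hCL : Integrable (fun ω => ‖h (f (Xt ω)) - f (X ω)‖) μ)
    (hreg : Integrable (fun ω => ‖g (f (X ω)) - X ω‖) μ)
    (lamMax : ℝ) (hlam : 0 < lamMax)
    (hLip : ∀ a b : EuclideanSpace ℝ (Fin dZ), ‖g a - g b‖ ≤ lamMax * ‖a - b‖) :
    (1 / lamMax) * ∫ ω, ‖g (h (f (Xt ω))) - X ω‖ ∂μ ≤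
      (∫ ω, ‖h (f (Xt ω)) - f (X ω)‖ ∂μ) +
        (1 / lamMax) * ∫ ω, ‖g (f (X ω)) - X ω‖ ∂μ := by
  have key : ∫ ω, ‖g (h (f (Xt ω))) - X ω‖ ∂μ ≤
      ∫ ω, (lamMax * ‖h (f (Xt ω)) - f (X ω)‖ + ‖g (f (X ω)) - X ω‖) ∂μ := by
    refine integral_mono hRC ((hCL.const_mul lamMax).add hreg) fun ω => ?_
    calc ‖g (h (f (Xt ω))) - X ω‖
        ≤ ‖g (h (f (Xt ω))) - g (f (X ω))‖ + ‖g (f (X ω)) - X ω‖ :=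
          norm_sub_le_norm_sub_add_norm_sub _ _ _
      _ ≤ lamMax * ‖h (f (Xt ω)) - f (X ω)‖ + ‖g (f (X ω)) - X ω‖ := by
          gcongr; exact hLip _ _
  rw [integral_add (hCL.const_mul lamMax) hreg, integral_const_mul] at key
  have h2 := mul_le_mul_of_nonneg_left key (one_div_pos.mpr hlam).le
  rwa [mul_add, ← mul_assoc, one_div_mul_cancel hlam.ne', one_mul] at h2
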